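/- The rational function F_n(z_1,...,z_n) = α^n ∏_{1≤i≠j≤n} ζ(z_i/z_j), where α = (1-qt^{-1})/((1-q)(1-t^{-1})) and ζ(x) = (x-1)(x-qt^{-1})/((x-q)(x-t^{-1})), is a symmetric rational function of the form f(z_1,...,z_n) · ∏_{1≤i≠j≤n} (1 - z_i/z_j)/((1 - q z_i/z_j)(1 - z_i/(t z_j))) where f is a symmetric Laurent polynomial satisfying the wheel conditions: f(xq/t, xq, x, z_4,...,z_n) = 0 and f(xq/t, x/t, x, z_4,...,z_n) = 0. -/

import Mathlib

open Finset

/-- `ζ(x) = (x-1)(x-qt⁻¹)/((x-q)(x-t⁻¹))`. -/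
noncomputable def zetaQT {K : Type*} [Field K] (q t x : K) : K :=
  (x - 1) * (x - q * t⁻¹) / ((x - q) * (x - t⁻¹))

/-- `α = (1-qt⁻¹)/((1-q)(1-t⁻¹))`. -/
noncomputable def alphaQT {K : Type*} [Field K] (q t : K) : K :=
  (1 - q * t⁻¹) / ((1 - q) * (1 - t⁻¹))

/-- `F_n(z₁,…,z_n) = αⁿ ∏_{1≤i≠j≤n} ζ(z_i/z_j)`. -/
noncomputable def Fsh {K : Type*} [Field K] (q t : K) (n : ℕ) (z : Fin n → K) : K :=
  alphaQT q t ^ n * ∏ p ∈ Finset.univ.offDiag, zetaQT q t (z p.1 / z p.2)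

/-- The symmetric Laurent polynomial `f(z₁,…,z_n) = αⁿ (∏ₖ z_k)^{-(n-1)} ∏_{i≠j}(z_i - qt⁻¹ z_j)`
obtained by dividing `F_n` by `∏_{i≠j} (1-z_i/z_j)/((1-q z_i/z_j)(1-z_i/(t z_j)))`. -/
noncomputable def fWheel {K : Type*} [Field K] (q t : K) (n : ℕ) (z : Fin n → K) : K :=
  alphaQT q t ^ n * ((∏ k, z k) ^ (n - 1))⁻¹ *
    ∏ p ∈ Finset.univ.offDiag, (z p.1 - q * t⁻¹ * z p.2)

/-- Reindexing a product over the off-diagonal by the swap map. -/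
lemma offDiag_prod_swap {n : ℕ} {K : Type*} [CommMonoid K] (f : Fin n → Fin n → K) :
    ∏ p ∈ Finset.univ.offDiag, f p.1 p.2 = ∏ p ∈ Finset.univ.offDiag, f p.2 p.1 := by
  apply Finset.prod_nbij' (i := Prod.swap) (j := Prod.swap) <;>
    simp [Finset.mem_offDiag, ne_comm]

/-- Reindexing a product over the off-diagonal by a permutation. -/
lemma offDiag_prod_perm {n : ℕ} {K : Type*} [CommMonoid K] (σ : Equiv.Perm (Fin n))
    (f : Fin n → Fin n → K) :
    ∏ p ∈ Finset.univ.offDiag, f (σ p.1) (σ p.2) = ∏ p ∈ Finset.univ.offDiag, f p.1 p.2 := by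
  apply Finset.prod_nbij' (i := fun p => (σ p.1, σ p.2)) (j := fun p => (σ⁻¹ p.1, σ⁻¹ p.2)) <;>
    simp [Finset.mem_offDiag]

/-- The product of the second coordinates over the off-diagonal. -/
lemma offDiag_prod_snd {n : ℕ} {K : Type*} [Field K] (hn : 1 ≤ n) (z : Fin n → K)
    (hz : ∀ i, z i ≠ 0) :
    ∏ p ∈ Finset.univ.offDiag, z p.2 = (∏ k, z k) ^ (n - 1) := by
  have h1 : ∏ p ∈ (univ ×ˢ univ : Finset (Fin n × Fin n)), z p.2 = (∏ k, z k) ^ n := by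
    rw [Finset.prod_product]
    simp
  rw [← Finset.diag_union_offDiag (univ : Finset (Fin n)),
      Finset.prod_union (Finset.disjoint_diag_offDiag _), Finset.prod_diag] at h1
  have hz0 : (∏ k, z k) ≠ 0 := Finset.prod_ne_zero_iff.mpr fun i _ => hz i
  have h2 : (∏ k, z k) * (∏ k, z k) ^ (n - 1) = (∏ k, z k) ^ n := by
    rw [← pow_succ']
    congr 1
    omega
  rw [← h2] at h1
  exact mul_left_cancel₀ hz0 h1

/-- `F_n` is of the form `f · ∏_{i≠j} (1-z_i/z_j)/((1-qz_i/z_j)(1-z_i/(tz_j)))` where `f` is the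
symmetric Laurent polynomial `fWheel`, which satisfies the wheel conditions
`f(xq/t, xq, x, …) = 0` and `f(xq/t, x/t, x, …) = 0`. -/
theorem Fsh_wheel_form {K : Type*} [Field K] (q t : K) (ht : t ≠ 0) (n : ℕ) (hn : 3 ≤ n) :
    (∀ z : Fin n → K, (∀ i, z i ≠ 0) →
      (∀ i j : Fin n, i ≠ j → z i ≠ z j ∧ z i - q * z j ≠ 0 ∧ z i - t⁻¹ * z j ≠ 0) →
      Fsh q t n z = fWheel q t n z *
        ∏ p ∈ Finset.univ.offDiag,
          ((1 - z p.1 / z p.2) / ((1 - q * (z p.1 / z p.2)) * (1 - z p.1 / (t * z p.2))))) ∧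
    (∀ (σ : Equiv.Perm (Fin n)) (z : Fin n → K), fWheel q t n (z ∘ σ) = fWheel q t n z) ∧
    (∀ (x : K) (z : Fin n → K), z ⟨0, by omega⟩ = x * q * t⁻¹ → z ⟨1, by omega⟩ = x * q →
      z ⟨2, by omega⟩ = x → fWheel q t n z = 0) ∧
    (∀ (x : K) (z : Fin n → K), z ⟨0, by omega⟩ = x * q * t⁻¹ → z ⟨1, by omega⟩ = x * t⁻¹ →
      z ⟨2, by omega⟩ = x → fWheel q t n z = 0) := by
  refine ⟨?_, ?_, ?_, ?_⟩
  · -- main identity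
    intro z hz h
    have hP0 : ((∏ k, z k) ^ (n - 1)) ≠ 0 :=
      pow_ne_zero _ (Finset.prod_ne_zero_iff.mpr fun i _ => hz i)
    have hD1 : (∏ p ∈ Finset.univ.offDiag, (z p.1 - q * z p.2)) ≠ 0 :=
      Finset.prod_ne_zero_iff.mpr fun p hp =>
        (h p.1 p.2 (Finset.mem_offDiag.mp hp).2.2).2.1
    have hD2 : (∏ p ∈ Finset.univ.offDiag, (z p.1 - t⁻¹ * z p.2)) ≠ 0 :=
      Finset.prod_ne_zero_iff.mpr fun p hp =>
        (h p.1 p.2 (Finset.mem_offDiag.mp hp).2.2).2.2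
    -- rewrite the ζ-product termwise
    have hL : ∏ p ∈ Finset.univ.offDiag, zetaQT q t (z p.1 / z p.2)
        = ∏ p ∈ Finset.univ.offDiag,
            ((z p.1 - z p.2) * (z p.1 - q * t⁻¹ * z p.2)
              / ((z p.1 - q * z p.2) * (z p.1 - t⁻¹ * z p.2))) := by
      refine Finset.prod_congr rfl fun p hp => ?_
      obtain ⟨-, -, hpne⟩ := Finset.mem_offDiag.mp hp
      obtain ⟨-, hq1, ht1⟩ := h p.1 p.2 hpne
      have hw : z p.2 ≠ 0 := hz p.2
      have hq2 : z p.1 / z p.2 - q ≠ 0 := by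
        rw [sub_ne_zero, ne_eq, div_eq_iff hw]
        rw [sub_ne_zero] at hq1
        simpa [mul_comm] using hq1
      have ht2 : z p.1 / z p.2 - t⁻¹ ≠ 0 := by
        rw [sub_ne_zero, ne_eq, div_eq_iff hw]
        rw [sub_ne_zero] at ht1
        simpa [mul_comm] using ht1
      rw [zetaQT, div_eq_div_iff (mul_ne_zero hq2 ht2) (mul_ne_zero hq1 ht1)]
      field_simp
    -- rewrite the other product termwise
    have hR : ∏ p ∈ Finset.univ.offDiag,
          ((1 - z p.1 / z p.2) / ((1 - q * (z p.1 / z p.2)) * (1 - z p.1 / (t * z p.2))))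
        = ∏ p ∈ Finset.univ.offDiag,
            (z p.2 * (z p.2 - z p.1) / ((z p.2 - q * z p.1) * (z p.2 - t⁻¹ * z p.1))) := by
      refine Finset.prod_congr rfl fun p hp => ?_
      obtain ⟨-, -, hpne⟩ := Finset.mem_offDiag.mp hp
      obtain ⟨-, hq1, ht1⟩ := h p.2 p.1 (Ne.symm hpne)
      have hw : z p.2 ≠ 0 := hz p.2
      have hq2 : 1 - q * (z p.1 / z p.2) ≠ 0 := by
        rw [mul_div_assoc', ← div_self hw, div_sub_div_same]
        exact div_ne_zero hq1 hw
      have ht2 : 1 - z p.1 / (t * z p.2) ≠ 0 := by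
        have h3 : t * z p.2 ≠ 0 := mul_ne_zero ht hw
        rw [← div_self h3, div_sub_div_same]
        refine div_ne_zero ?_ h3
        intro hc
        apply ht1
        have h4 : z p.2 - t⁻¹ * z p.1 = t⁻¹ * (t * z p.2 - z p.1) := by
          rw [mul_sub, inv_mul_cancel_left₀ ht]
        rw [h4, hc, mul_zero]
      rw [div_eq_div_iff (mul_ne_zero hq2 ht2) (mul_ne_zero hq1 ht1)]
      field_simp
    rw [Fsh, fWheel, hL, hR]
    simp only [Finset.prod_div_distrib, Finset.prod_mul_distrib]
    rw [offDiag_prod_snd (by omega) z hz]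
    rw [show ∏ p ∈ Finset.univ.offDiag, (z p.2 - z p.1)
          = ∏ p ∈ Finset.univ.offDiag, (z p.1 - z p.2) from
        offDiag_prod_swap (fun i j => z j - z i),
      show ∏ p ∈ Finset.univ.offDiag, (z p.2 - q * z p.1)
          = ∏ p ∈ Finset.univ.offDiag, (z p.1 - q * z p.2) from
        offDiag_prod_swap (fun i j => z j - q * z i),
      show ∏ p ∈ Finset.univ.offDiag, (z p.2 - t⁻¹ * z p.1)
          = ∏ p ∈ Finset.univ.offDiag, (z p.1 - t⁻¹ * z p.2) from
        offDiag_prod_swap (fun i j => z j - t⁻¹ * z i)]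
    have hD2' : (∏ p ∈ Finset.univ.offDiag, (z p.1 * t - z p.2)) ≠ 0 := by
      refine Finset.prod_ne_zero_iff.mpr fun p hp => ?_
      have h5 := (h p.1 p.2 (Finset.mem_offDiag.mp hp).2.2).2.2
      intro hc
      apply h5
      have h6 : z p.1 - t⁻¹ * z p.2 = t⁻¹ * (z p.1 * t - z p.2) := by
        rw [mul_sub, mul_comm (z p.1) t, inv_mul_cancel_left₀ ht]
      rw [h6, hc, mul_zero]
    field_simp [hP0, hD1, hD2]
    rw [show ∏ x ∈ univ.offDiag, (z x.1 * t - q * z x.2) / t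
        = ∏ x ∈ univ.offDiag, (t * z x.1 - q * z x.2) / t from
      Finset.prod_congr rfl fun _ _ => by ring]
  · -- symmetry
    intro σ z
    simp only [fWheel, Function.comp]
    rw [Equiv.prod_comp σ z, offDiag_prod_perm σ (fun i j => z i - q * t⁻¹ * z j)]
  · -- first wheel condition
    intro x z h0 h1 h2
    rw [fWheel, mul_eq_zero]
    right
    refine Finset.prod_eq_zero (i := (⟨0, by omega⟩, ⟨2, by omega⟩)) ?_ ?_
    · rw [Finset.mem_offDiag]
      refine ⟨Finset.mem_univ _, Finset.mem_univ _, ?_⟩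
      simp [Fin.ext_iff]
    · rw [h0, h2]; ring
  · -- second wheel condition
    intro x z h0 h1 h2
    rw [fWheel, mul_eq_zero]
    right
    refine Finset.prod_eq_zero (i := (⟨0, by omega⟩, ⟨2, by omega⟩)) ?_ ?_
    · rw [Finset.mem_offDiag]
      refine ⟨Finset.mem_univ _, Finset.mem_univ _, ?_⟩
      simp [Fin.ext_iff]
    · rw [h0, h2]; ring
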